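/- (Logarithmic Grönwall estimate, zero constant case.) Let T > 0 and K ≥ 0. Let u : [0, T] → [0, e^{−2}] be continuous and satisfy u(t) ≤ K·∫₀^t (−u(s)·ln u(s)) ds for every t ∈ [0, T]. Then u(t) = 0 for every t ∈ [0, T]. -/

import Mathlib

open intervalIntegral

/-- `x ↦ -(x log x)` is monotone on `[0, e⁻¹]`. -/
lemma phi_mono_aux : MonotoneOn (fun x : ℝ => -(x * Real.log x)) (Set.Icc 0 (Real.exp (-1))) := by
  apply monotoneOn_of_deriv_nonneg (convex_Icc _ _)
    (Real.continuous_mul_log.neg.continuousOn)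
  · intro x hx
    rw [interior_Icc] at hx
    exact (((Real.hasDerivAt_mul_log hx.1.ne').neg).differentiableAt).differentiableWithinAt
  · intro x hx
    rw [interior_Icc] at hx
    rw [((Real.hasDerivAt_mul_log hx.1.ne').neg).deriv]
    have : Real.log x ≤ -1 := by
      rw [← Real.log_exp (-1)]
      exact Real.log_le_log hx.1 hx.2.le
    linarith

/-- Logarithmic Grönwall estimate, zero constant case: if `u : [0,T] → [0, e⁻²]`
is continuous with `u(t) ≤ K ∫₀ᵗ (-u(s) ln u(s)) ds`, then `u ≡ 0`. -/
theorem log_gronwall_zero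
    (T K : ℝ) (hT : 0 < T) (hK : 0 ≤ K)
    (u : ℝ → ℝ) (hu_cont : ContinuousOn u (Set.Icc 0 T))
    (hu_mem : ∀ t ∈ Set.Icc (0 : ℝ) T, u t ∈ Set.Icc (0 : ℝ) (Real.exp (-2)))
    (h_ineq : ∀ t ∈ Set.Icc (0 : ℝ) T,
        u t ≤ K * ∫ s in (0 : ℝ)..t, -(u s * Real.log (u s))) :
    ∀ t ∈ Set.Icc (0 : ℝ) T, u t = 0 := by
  -- clamp
  set v : ℝ → ℝ := fun s => u (min (max s 0) T) with hv_def
  have hclamp : ∀ s : ℝ, min (max s 0) T ∈ Set.Icc (0 : ℝ) T := by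
    intro s
    constructor
    · exact le_min (le_max_right _ _) hT.le
    · exact min_le_right _ _
  have hvc : Continuous v := by
    apply hu_cont.comp_continuous
    · exact (continuous_id.max continuous_const).min continuous_const
    · exact hclamp
  have hveq : ∀ s ∈ Set.Icc (0 : ℝ) T, v s = u s := by
    intro s hs
    simp only [hv_def]
    rw [max_eq_left hs.1, min_eq_left hs.2]
  set g : ℝ → ℝ := fun s => -(v s * Real.log (v s)) with hg_def
  have hgc : Continuous g := (Real.continuous_mul_log.comp hvc).neg
  have hg_nonneg : ∀ s, 0 ≤ g s := by
    intro s
    have hm := hu_mem _ (hclamp s)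
    have h1 : v s ≤ 1 := hm.2.trans (by
      rw [show (1:ℝ) = Real.exp 0 by simp]
      exact Real.exp_le_exp.mpr (by norm_num))
    simp only [hg_def, neg_nonneg]
    exact Real.mul_log_nonpos hm.1 h1
  set F : ℝ → ℝ := fun t => ∫ s in (0:ℝ)..t, g s with hF_def
  have hF_deriv : ∀ t : ℝ, HasDerivAt F (g t) t := fun t =>
    (hgc.integral_hasStrictDerivAt 0 t).hasDerivAt
  have hF0 : F 0 = 0 := by simp [hF_def]
  have hF_nonneg : ∀ t ∈ Set.Icc (0:ℝ) T, 0 ≤ F t := by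
    intro t ht
    exact intervalIntegral.integral_nonneg ht.1 (fun s _ => hg_nonneg s)
  have hbound : ∀ t ∈ Set.Icc (0:ℝ) T, u t ≤ K * F t := by
    intro t ht
    have := h_ineq t ht
    have heq : (∫ s in (0:ℝ)..t, -(u s * Real.log (u s))) = F t := by
      apply intervalIntegral.integral_congr
      intro s hs
      rw [Set.uIcc_of_le ht.1] at hs
      show -(u s * Real.log (u s)) = -(v s * Real.log (v s))
      rw [hveq s ⟨hs.1, hs.2.trans ht.2⟩]
    rwa [heq] at this
  -- key estimate
  have key : ∀ C : ℝ, 2 * Real.exp (K * T) ≤ C →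
      ∀ t ∈ Set.Icc (0:ℝ) T, K * F t < Real.exp (-(C * Real.exp (-(K * t)))) := by
    intro C hC
    have hCpos : 0 < C := lt_of_lt_of_le (by positivity) hC
    set w : ℝ → ℝ := fun t => Real.exp (-(C * Real.exp (-(K * t)))) with hw_def
    have hwpos : ∀ t, 0 < w t := fun t => Real.exp_pos _
    have hw_le : ∀ t ∈ Set.Icc (0:ℝ) T, w t ≤ Real.exp (-2) := by
      intro t ht
      apply Real.exp_le_exp.mpr
      have h1 : 2 ≤ C * Real.exp (-(K * t)) := by
        have h2 : Real.exp (K * T) * Real.exp (-(K * t)) = Real.exp (K * (T - t)) := by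
          rw [← Real.exp_add]; ring_nf
        have h3 : (1:ℝ) ≤ Real.exp (K * (T - t)) := by
          rw [show (1:ℝ) = Real.exp 0 by simp]
          apply Real.exp_le_exp.mpr
          have : 0 ≤ T - t := by linarith [ht.2]
          positivity
        calc (2:ℝ) = 2 * 1 := by ring
          _ ≤ (2 * Real.exp (K * T)) * Real.exp (-(K * t)) := by
              rw [mul_assoc, h2]
              have := Real.exp_pos (-(K*t))
              nlinarith
          _ ≤ C * Real.exp (-(K * t)) := by
              have := Real.exp_pos (-(K*t))
              nlinarith
      linarith
    have hw_deriv : ∀ t, HasDerivAt w (w t * (C * (Real.exp (-(K * t)) * K))) t := by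
      intro t
      have h1 : HasDerivAt (fun t : ℝ => -(K * t)) (-K) t := by
        have h := ((hasDerivAt_id' t).const_mul K).neg; rw [mul_one] at h; exact h
      have h2 : HasDerivAt (fun t : ℝ => Real.exp (-(K * t))) (Real.exp (-(K * t)) * (-K)) t :=
        h1.exp
      have h3 : HasDerivAt (fun t : ℝ => -(C * Real.exp (-(K * t))))
          (-(C * (Real.exp (-(K * t)) * (-K)))) t := (h2.const_mul C).neg
      have h4 := h3.exp
      convert h4 using 1
      simp only [hw_def]
      ring
    have hw_phi : ∀ t, K * -(w t * Real.log (w t)) = w t * (C * (Real.exp (-(K * t)) * K)) := by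
      intro t
      simp only [hw_def, Real.log_exp]
      ring
    -- contradiction argument
    by_contra hcon
    push_neg at hcon
    obtain ⟨t0, ht0, ht0'⟩ := hcon
    set D : ℝ → ℝ := fun t => K * F t - w t with hD_def
    have hD_deriv : ∀ t, HasDerivAt D (K * g t - w t * (C * (Real.exp (-(K * t)) * K))) t :=
      fun t => ((hF_deriv t).const_mul K).sub (hw_deriv t)
    have hDc : Continuous D := by
      have : Differentiable ℝ D := fun t => (hD_deriv t).differentiableAt
      exact this.continuous
    set S : Set ℝ := {t | t ∈ Set.Icc (0:ℝ) T ∧ 0 ≤ D t} with hS_def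
    have hS_ne : S.Nonempty := ⟨t0, ht0, by simp only [hD_def]; linarith⟩
    have hS_closed : IsClosed S :=
      (isClosed_Icc.inter (isClosed_le continuous_const hDc) : IsClosed (Set.Icc 0 T ∩ {t | 0 ≤ D t}))
    have hS_bdd : BddBelow S := ⟨0, fun x hx => hx.1.1⟩
    set ts := sInf S with hts_def
    have hts_mem : ts ∈ S := hS_closed.csInf_mem hS_ne hS_bdd
    have hD0 : D 0 < 0 := by
      simp only [hD_def, hF0]
      have := hwpos 0
      linarith
    have hts_pos : 0 < ts := by
      rcases lt_or_ge 0 ts with h | h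
      · exact h
      · exfalso
        have h0 : ts = 0 := le_antisymm h hts_mem.1.1
        rw [h0] at hts_mem
        linarith [hts_mem.2]
    have hlt : ∀ x, 0 ≤ x → x < ts → D x < 0 := by
      intro x hx0 hxts
      by_contra h
      push_neg at h
      have : x ∈ S := ⟨⟨hx0, hxts.le.trans hts_mem.1.2⟩, h⟩
      exact absurd (csInf_le hS_bdd this) (not_le.mpr hxts)
    -- D is antitone on [0, ts]
    have hanti : AntitoneOn D (Set.Icc 0 ts) := by
      apply antitoneOn_of_deriv_nonpos (convex_Icc _ _) hDc.continuousOn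
      · intro x _
        exact (hD_deriv x).differentiableAt.differentiableWithinAt
      · intro x hx
        rw [interior_Icc] at hx
        rw [(hD_deriv x).deriv]
        have hxIcc : x ∈ Set.Icc (0:ℝ) T := ⟨hx.1.le, hx.2.le.trans hts_mem.1.2⟩
        have hum := hu_mem x hxIcc
        have huw : u x ≤ w x := by
          have h1 := hbound x hxIcc
          have h2 := hlt x hx.1.le hx.2
          simp only [hD_def] at h2
          linarith
        have hwe : w x ≤ Real.exp (-1) := (hw_le x hxIcc).trans
          (Real.exp_le_exp.mpr (by norm_num))
        have hgx : g x = -(u x * Real.log (u x)) := by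
          rw [hg_def]; simp only; rw [hveq x hxIcc]
        have hmono := phi_mono_aux (a := u x) (b := w x)
          ⟨hum.1, (huw.trans hwe)⟩ ⟨(hwpos x).le, hwe⟩ huw
        simp only at hmono
        rw [hgx]
        have := hw_phi x
        nlinarith [hmono, hK]
    have hfinal := hanti (Set.left_mem_Icc.mpr hts_pos.le)
      (Set.right_mem_Icc.mpr hts_pos.le) hts_pos.le
    linarith [hts_mem.2]
  -- conclude
  intro t ht
  have hum := hu_mem t ht
  by_contra hne
  have hupos : 0 < u t := lt_of_le_of_ne hum.1 (Ne.symm hne)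
  set C : ℝ := max (2 * Real.exp (K * T)) ((1 - Real.log (u t)) * Real.exp (K * T)) with hC_def
  have h1 := key C (le_max_left _ _) t ht
  have h2 : Real.exp (-(C * Real.exp (-(K * t)))) ≤ u t := by
    rw [← Real.le_log_iff_exp_le hupos]
    have hC2 : (1 - Real.log (u t)) * Real.exp (K * T) ≤ C := le_max_right _ _
    have hexp : Real.exp (K * T) * Real.exp (-(K * t)) = Real.exp (K * (T - t)) := by
      rw [← Real.exp_add]; ring_nf
    have h3 : (1:ℝ) ≤ Real.exp (K * (T - t)) := by
      rw [show (1:ℝ) = Real.exp 0 by simp]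
      apply Real.exp_le_exp.mpr
      have : 0 ≤ T - t := by linarith [ht.2]
      positivity
    have hlogu : Real.log (u t) ≤ 0 := by
      have := hum.2
      have h4 : u t ≤ 1 := this.trans (by
        rw [show (1:ℝ) = Real.exp 0 by simp]
        exact Real.exp_le_exp.mpr (by norm_num))
      exact Real.log_nonpos hum.1 h4
    have hepos := Real.exp_pos (-(K*t))
    have h5 : 1 - Real.log (u t) ≤ C * Real.exp (-(K * t)) := by
      calc 1 - Real.log (u t) ≤ (1 - Real.log (u t)) * Real.exp (K * (T - t)) := by nlinarith
        _ = ((1 - Real.log (u t)) * Real.exp (K * T)) * Real.exp (-(K * t)) := by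
            rw [mul_assoc, hexp]
        _ ≤ C * Real.exp (-(K * t)) := by nlinarith
    linarith
  linarith [hbound t ht, h1, h2]
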